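/- Let L ≥ 1 be a positive integer, let I, T, N, λ1 be positive reals, let σ_{y1},…,σ_{yL} be positive reals with Λhalf = diag(σ_{y1},…,σ_{yL}), and let λ2, λ3, τ2, τ3, C1, C2 be reals with λ2 − τ2 ≠ 0, λ3 − τ3 ≠ 0, λ2 + (L−1)τ2 ≠ 0, λ3 + (L−1)τ3 ≠ 0, and C1(λ3 + (L−1)τ3) − C2(λ2 + (L−1)τ2) ≠ 0. Let ω ∈ ℝ^L be the vector with entries ω_l = σ_{yl}·λ1^{1/2}. Then (I·T/N)·[C1·ω^⊤·Λhalf^{-1}·((λ2 − τ2)·I_L + τ2·J_L)^{-1}·Λhalf^{-1}·ω − C2·ω^⊤·Λhalf^{-1}·((λ3 − τ3)·I_L + τ3·J_L)^{-1}·Λhalf^{-1}·ω]^{-1} = (I·T/(L·N·λ1))·(λ2 + (L−1)τ2)·(λ3 + (L−1)τ3) / [C1(λ3 + (L−1)τ3) − C2(λ2 + (L−1)τ2)]. -/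

import Mathlib

open Matrix

/-- The u×u all-ones matrix over ℝ. -/
def allOnes (u : ℕ) : Matrix (Fin u) (Fin u) ℝ := Matrix.of fun _ _ => 1

lemma allOnes_mul_allOnes (L : ℕ) : allOnes L * allOnes L = (L : ℝ) • allOnes L := by
  ext i j
  simp [allOnes, Matrix.mul_apply, Finset.sum_const]

lemma M_inv (L : ℕ) (a τ : ℝ) (ha : a ≠ 0) (hb : a + (L : ℝ) * τ ≠ 0) :
    (a • (1 : Matrix (Fin L) (Fin L) ℝ) + τ • allOnes L)⁻¹ =
      a⁻¹ • (1 : Matrix (Fin L) (Fin L) ℝ) - (a⁻¹ * τ / (a + (L : ℝ) * τ)) • allOnes L := by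
  apply Matrix.inv_eq_right_inv
  ext i j
  simp only [Matrix.mul_apply, Matrix.add_apply, Matrix.sub_apply, Matrix.smul_apply,
    Matrix.one_apply, allOnes, Matrix.of_apply, smul_eq_mul, mul_ite, mul_one, mul_zero,
    add_mul, ite_mul, zero_mul, mul_sub, sub_mul,
    Finset.sum_add_distrib, Finset.sum_sub_distrib, Finset.sum_ite_eq, Finset.sum_ite_eq',
    Finset.sum_const, Finset.card_univ, Finset.mem_univ, if_true, Fintype.card_fin,
    nsmul_eq_mul]
  rcases eq_or_ne i j with h | h <;> simp [h] <;> field_simp [show a + τ * (L : ℝ) ≠ 0 by rwa [mul_comm], show τ * (L : ℝ) + a ≠ 0 by rwa [add_comm, mul_comm]] <;> ring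

lemma quad_form (L : ℕ) (σ : Fin L → ℝ) (hσ : ∀ l, 0 < σ l) (a τ s : ℝ)
    (ha : a ≠ 0) (hb : a + (L : ℝ) * τ ≠ 0) :
    (fun l => σ l * s) ⬝ᵥ (((Matrix.diagonal σ)⁻¹ *
        (a • (1 : Matrix (Fin L) (Fin L) ℝ) + τ • allOnes L)⁻¹ *
        (Matrix.diagonal σ)⁻¹) *ᵥ (fun l => σ l * s)) =
      s * s * (L : ℝ) / (a + (L : ℝ) * τ) := by
  have hD : (Matrix.diagonal σ)⁻¹ = Matrix.diagonal (fun l => (σ l)⁻¹) := by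
    apply Matrix.inv_eq_right_inv
    rw [Matrix.diagonal_mul_diagonal]
    ext i j
    by_cases h : i = j <;> simp [h, Matrix.diagonal_apply, Matrix.one_apply, mul_inv_cancel₀ (hσ _).ne']
  rw [M_inv L a τ ha hb, hD]
  rw [← Matrix.mulVec_mulVec, ← Matrix.mulVec_mulVec]
  have h1 : Matrix.diagonal (fun l => (σ l)⁻¹) *ᵥ (fun l => σ l * s) = fun _ => s := by
    ext i
    simp [Matrix.mulVec_diagonal, ← mul_assoc, inv_mul_cancel₀ (hσ i).ne']
  rw [h1]
  set c : ℝ := a⁻¹ * τ / (a + (L : ℝ) * τ)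
  have h2 : (a⁻¹ • (1 : Matrix (Fin L) (Fin L) ℝ) - c • allOnes L) *ᵥ (fun _ => s) =
      fun _ => a⁻¹ * s - c * ((L : ℝ) * s) := by
    ext i
    simp [Matrix.mulVec, dotProduct, allOnes, sub_mul, Finset.sum_sub_distrib,
      Matrix.one_apply, ite_mul, Finset.sum_ite_eq', Finset.sum_const, mul_assoc]
    ring
  rw [h2]
  have h3 : Matrix.diagonal (fun l => (σ l)⁻¹) *ᵥ (fun _ => a⁻¹ * s - c * ((L : ℝ) * s)) =
      fun l => (σ l)⁻¹ * (a⁻¹ * s - c * ((L : ℝ) * s)) := by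
    ext i; simp [Matrix.mulVec_diagonal]
  rw [h3]
  have h4 : ∀ l, σ l * s * ((σ l)⁻¹ * (a⁻¹ * s - c * ((L : ℝ) * s))) =
      s * (a⁻¹ * s - c * ((L : ℝ) * s)) := by
    intro l
    field_simp [(hσ l).ne']
  simp only [dotProduct, h4, Finset.sum_const, Finset.card_univ, Fintype.card_fin,
    nsmul_eq_mul]
  simp only [c]
  field_simp
  ring

/-- under common ICC values across endpoints, the general variance expression
for the common intervention effect estimator simplifies to the closed form of equation (10). -/
theorem common_effect_variance_closed_form
    (L : ℕ) (hL : 1 ≤ L) (I T N lam1 : ℝ)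
    (hI : 0 < I) (hT : 0 < T) (hN : 0 < N) (hlam1 : 0 < lam1)
    (σ : Fin L → ℝ) (hσ : ∀ l, 0 < σ l)
    (lam2 lam3 tau2 tau3 C1 C2 : ℝ)
    (h1 : lam2 - tau2 ≠ 0) (h2 : lam3 - tau3 ≠ 0)
    (h3 : lam2 + ((L : ℝ) - 1) * tau2 ≠ 0) (h4 : lam3 + ((L : ℝ) - 1) * tau3 ≠ 0)
    (h5 : C1 * (lam3 + ((L : ℝ) - 1) * tau3) - C2 * (lam2 + ((L : ℝ) - 1) * tau2) ≠ 0)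
    (ω : Fin L → ℝ) (hω : ∀ l, ω l = σ l * Real.sqrt lam1) :
    (I * T / N) *
      (C1 * (ω ⬝ᵥ (((Matrix.diagonal σ)⁻¹ *
              ((lam2 - tau2) • (1 : Matrix (Fin L) (Fin L) ℝ) + tau2 • allOnes L)⁻¹ *
              (Matrix.diagonal σ)⁻¹) *ᵥ ω)) -
       C2 * (ω ⬝ᵥ (((Matrix.diagonal σ)⁻¹ *
              ((lam3 - tau3) • (1 : Matrix (Fin L) (Fin L) ℝ) + tau3 • allOnes L)⁻¹ *
              (Matrix.diagonal σ)⁻¹) *ᵥ ω)))⁻¹ =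
    I * T / ((L : ℝ) * N * lam1) *
      (lam2 + ((L : ℝ) - 1) * tau2) * (lam3 + ((L : ℝ) - 1) * tau3) /
      (C1 * (lam3 + ((L : ℝ) - 1) * tau3) - C2 * (lam2 + ((L : ℝ) - 1) * tau2)) := by
  have hωf : ω = fun l => σ l * Real.sqrt lam1 := funext hω
  set s := Real.sqrt lam1 with hs
  have hss : s * s = lam1 := Real.mul_self_sqrt hlam1.le
  have hD2 : (lam2 - tau2) + (L : ℝ) * tau2 = lam2 + ((L : ℝ) - 1) * tau2 := by ring
  have hD3 : (lam3 - tau3) + (L : ℝ) * tau3 = lam3 + ((L : ℝ) - 1) * tau3 := by ring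
  have hb2 : (lam2 - tau2) + (L : ℝ) * tau2 ≠ 0 := by rw [hD2]; exact h3
  have hb3 : (lam3 - tau3) + (L : ℝ) * tau3 ≠ 0 := by rw [hD3]; exact h4
  have q2 := quad_form L σ hσ (lam2 - tau2) tau2 s h1 hb2
  have q3 := quad_form L σ hσ (lam3 - tau3) tau3 s h2 hb3
  rw [hωf, q2, q3, hss, hD2, hD3]
  have hL0 : (L : ℝ) ≠ 0 := by positivity
  have hlam1' : lam1 ≠ 0 := hlam1.ne'
  set D2 := lam2 + ((L : ℝ) - 1) * tau2
  set D3 := lam3 + ((L : ℝ) - 1) * tau3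
  have key : C1 * (lam1 * (L : ℝ) / D2) - C2 * (lam1 * (L : ℝ) / D3) =
      lam1 * (L : ℝ) * (C1 * D3 - C2 * D2) / (D2 * D3) := by
    field_simp
  rw [key, inv_div]
  field_simp
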